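/- Let ξ = X₁ + ... + X_N with X₁,...,X_N i.i.d., let ξ_{(i)} = ξ - X_i, and let X_i' be an independent copy of X_i. Then (ξ - ξ')(1_{ξ>0} - 1_{ξ'>0}) = (X_i - X_i')(1_{X_i + ξ_{(i)} > 0} - 1_{X_i' + ξ_{(i)} > 0}) where ξ' = ξ_{(i)} + X_i', and consequently E[ξ⁺] = E[ξ]·Pr(ξ > 0) + (N/2)·E[(X_i - X_i')(1_{X_i + ξ_{(i)} > 0} - 1_{X_i' + ξ_{(i)} > 0})]. -/

import Mathlib

open MeasureTheory ProbabilityTheory Real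

noncomputable def korkInd (t : ℝ) : ℝ := if 0 < t then 1 else 0

lemma korkInd_measurable : Measurable korkInd :=
  Measurable.ite (measurableSet_lt measurable_const measurable_id) measurable_const
    measurable_const

lemma korkInd_norm_le (t : ℝ) : ‖korkInd t‖ ≤ 1 := by
  unfold korkInd; split <;> simp

/-- Multivariate Korkine decomposition: with `ξ = Σ Xₙ`, `ξ₍ᵢ₎ = ξ - Xᵢ`,
and `X'` an independent copy of `Xᵢ`, setting `ξ' = ξ₍ᵢ₎ + X'`, the pointwise
identity `(ξ - ξ')(1_{ξ>0} - 1_{ξ'>0}) = (Xᵢ - X')(1_{Xᵢ+ξ₍ᵢ₎>0} - 1_{X'+ξ₍ᵢ₎>0})`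
holds, and `E[ξ⁺] = E[ξ]·Pr(ξ > 0) + (N/2)·E[(Xᵢ - X')(1_{Xᵢ+ξ₍ᵢ₎>0} - 1_{X'+ξ₍ᵢ₎>0})]`. -/
theorem korkine_decomposition_sum {Ω : Type*} [MeasureSpace Ω]
    [IsProbabilityMeasure (ℙ : Measure Ω)]
    (N : ℕ) (hN : 1 ≤ N) (X : Fin N → Ω → ℝ) (X' : Ω → ℝ) (i : Fin N)
    (hmeas : ∀ n, Measurable (X n)) (hmeas' : Measurable X')
    (hL2 : ∀ n, MemLp (X n) 2 ℙ) (hL2' : MemLp X' 2 ℙ)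
    (hindep : iIndepFun X ℙ)
    (hident : ∀ n, IdentDistrib (X n) (X i) ℙ ℙ)
    (hident' : IdentDistrib X' (X i) ℙ ℙ)
    (hindep' : IndepFun X' (fun ω => (fun n => X n ω)) ℙ) :
    (∀ ω : Ω,
      ((∑ n, X n ω) - ((∑ n, X n ω) - X i ω + X' ω)) *
          ((if 0 < ∑ n, X n ω then (1 : ℝ) else 0)
            - (if 0 < (∑ n, X n ω) - X i ω + X' ω then (1 : ℝ) else 0))
        = (X i ω - X' ω) *
          ((if 0 < X i ω + ((∑ n, X n ω) - X i ω) then (1 : ℝ) else 0)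
            - (if 0 < X' ω + ((∑ n, X n ω) - X i ω) then (1 : ℝ) else 0)))
    ∧ ∫ ω, max (∑ n, X n ω) 0 ∂ℙ
        = (∫ ω, (∑ n, X n ω) ∂ℙ) * (ℙ {ω | 0 < ∑ n, X n ω}).toReal
          + (N / 2 : ℝ) * ∫ ω, (X i ω - X' ω) *
              ((if 0 < X i ω + ((∑ n, X n ω) - X i ω) then (1 : ℝ) else 0)
                - (if 0 < X' ω + ((∑ n, X n ω) - X i ω) then (1 : ℝ) else 0)) ∂ℙ := by
  classical
  constructor
  · intro ω
    have e1 : X i ω + ((∑ n, X n ω) - X i ω) = ∑ n, X n ω := by ring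
    have e2 : X' ω + ((∑ n, X n ω) - X i ω) = (∑ n, X n ω) - X i ω + X' ω := by ring
    rw [e1, e2]; ring
  -- notation
  have hif : ∀ t : ℝ, (if 0 < t then (1 : ℝ) else 0) = korkInd t := fun _ => rfl
  simp only [hif]
  -- basic measurability
  have hmξ : Measurable (fun ω => ∑ n, X n ω) :=
    Finset.measurable_sum Finset.univ fun n _ => hmeas n
  have hmS : Measurable (fun ω => (∑ n, X n ω) - X i ω) := hmξ.sub (hmeas i)
  have hmXS : Measurable (fun ω => X' ω + ((∑ n, X n ω) - X i ω)) := hmeas'.add hmS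
  -- integrability
  have hint : ∀ n, Integrable (X n) ℙ := fun n => (hL2 n).integrable one_le_two
  have hint' : Integrable X' ℙ := hL2'.integrable one_le_two
  have hintξ : Integrable (fun ω => ∑ n, X n ω) ℙ :=
    integrable_finset_sum Finset.univ fun n _ => hint n
  have hintS : Integrable (fun ω => (∑ n, X n ω) - X i ω) ℙ := hintξ.sub (hint i)
  have hbm : ∀ (f g : Ω → ℝ), Integrable f ℙ → Measurable g →
      Integrable (fun ω => f ω * korkInd (g ω)) ℙ := by
    intro f g hf hg
    have h := hf.bdd_mul ((korkInd_measurable.comp hg).aestronglyMeasurable)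
      (c := 1) (Filter.Eventually.of_forall fun ω => korkInd_norm_le _)
    exact h.congr (Filter.Eventually.of_forall fun ω => mul_comm _ _)
  have I1 : Integrable (fun ω => (∑ n, X n ω) * korkInd (∑ n, X n ω)) ℙ := hbm _ _ hintξ hmξ
  have I2 : Integrable (fun ω => (∑ n, X n ω) *
      korkInd (X' ω + ((∑ n, X n ω) - X i ω))) ℙ := hbm _ _ hintξ hmXS
  have I3 : Integrable (fun ω => (X' ω + ((∑ n, X n ω) - X i ω)) *
      korkInd (∑ n, X n ω)) ℙ := hbm _ _ (hint'.add hintS) hmξ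
  have I4 : Integrable (fun ω => (X' ω + ((∑ n, X n ω) - X i ω)) *
      korkInd (X' ω + ((∑ n, X n ω) - X i ω))) ℙ := hbm _ _ (hint'.add hintS) hmXS
  have I5 : Integrable (fun ω => X' ω * korkInd (∑ n, X n ω)) ℙ := hbm _ _ hint' hmξ
  have I6 : Integrable (fun ω => ((∑ n, X n ω) - X i ω) * korkInd (∑ n, X n ω)) ℙ :=
    hbm _ _ hintS hmξ
  have I7 : ∀ n, Integrable (fun ω => X n ω * korkInd (∑ n, X n ω)) ℙ :=
    fun n => hbm _ _ (hint n) hmξ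
  -- the positive part as an integral
  have h_max : ∫ ω, max (∑ n, X n ω) 0 ∂ℙ
      = ∫ ω, (∑ n, X n ω) * korkInd (∑ n, X n ω) ∂ℙ := by
    refine integral_congr_ae (Filter.Eventually.of_forall fun ω => ?_)
    dsimp only
    unfold korkInd
    split_ifs with h
    · rw [mul_one]; exact max_eq_left h.le
    · rw [mul_zero]; exact max_eq_right (not_lt.mp h)
  -- indicator integral is the probability
  have hmsP : MeasurableSet {ω | 0 < ∑ n, X n ω} := measurableSet_lt measurable_const hmξ
  have h_indP : ∫ ω, korkInd (∑ n, X n ω) ∂ℙ = (ℙ {ω | 0 < ∑ n, X n ω}).toReal := by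
    rw [← measureReal_def, ← integral_indicator_one hmsP]
    refine integral_congr_ae (Filter.Eventually.of_forall fun ω => ?_)
    dsimp only
    unfold korkInd
    by_cases h : 0 < ∑ n, X n ω
    · simp [Set.indicator_apply, h]
    · simp [Set.indicator_apply, h]
  -- independence of X' and the indicator of ξ
  have hφm : Measurable (fun v : Fin N → ℝ => korkInd (∑ n, v n)) :=
    korkInd_measurable.comp (Finset.measurable_sum Finset.univ fun n _ => measurable_pi_apply n)
  have hX'ind : IndepFun X' (fun ω => korkInd (∑ n, X n ω)) ℙ :=
    hindep'.comp measurable_id hφm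
  have h_mulX' : ∫ ω, X' ω * korkInd (∑ n, X n ω) ∂ℙ
      = (∫ ω, X' ω ∂ℙ) * (ℙ {ω | 0 < ∑ n, X n ω}).toReal := by
    have h := hX'ind.integral_fun_mul_eq_mul_integral hmeas'.aestronglyMeasurable
      ((korkInd_measurable.comp hmξ).aestronglyMeasurable)
    rw [h_indP] at h
    exact h
  -- the law of the whole vector is a product measure
  set μ : Measure ℝ := Measure.map (X i) ℙ with hμdef
  haveI : IsProbabilityMeasure μ := Measure.isProbabilityMeasure_map (hmeas i).aemeasurable
  have hmΦ : Measurable (fun ω => (fun n => X n ω)) := measurable_pi_lambda _ hmeas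
  have hπ : Measure.map (fun ω => (fun n => X n ω)) ℙ = Measure.pi (fun _ : Fin N => μ) := by
    refine (Measure.pi_eq (μ := fun _ : Fin N => μ) fun s hs => ?_).symm
    rw [Measure.map_apply hmΦ (MeasurableSet.univ_pi hs)]
    have hpre : (fun ω => (fun n => X n ω)) ⁻¹' (Set.univ.pi s)
        = ⋂ n ∈ Finset.univ, X n ⁻¹' s n := by
      ext ω; simp [Set.mem_pi]
    rw [hpre, hindep.measure_inter_preimage_eq_mul Finset.univ (fun n _ => hs n)]
    refine Finset.prod_congr rfl fun n _ => ?_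
    rw [hμdef, ← (hident n).map_eq, Measure.map_apply (hmeas n) (hs n)]
  -- exchangeability : E[Xₙ 1_{ξ>0}] does not depend on n
  have hgm : ∀ m : Fin N, Measurable (fun v : Fin N → ℝ => v m * korkInd (∑ k, v k)) :=
    fun m => (measurable_pi_apply m).mul hφm
  have hexch : ∀ n, ∫ ω, X n ω * korkInd (∑ k, X k ω) ∂ℙ
      = ∫ ω, X i ω * korkInd (∑ k, X k ω) ∂ℙ := by
    intro n
    set e : Fin N ≃ Fin N := Equiv.swap n i with hedef
    set T := MeasurableEquiv.piCongrLeft (fun _ : Fin N => ℝ) e with hTdef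
    have hTapp : ∀ (v : Fin N → ℝ) (j : Fin N), T v (e j) = v j := by
      intro v j
      rw [hTdef]
      exact MeasurableEquiv.piCongrLeft_apply_apply (β := fun _ : Fin N => ℝ) e v j
    have key : ∀ v : Fin N → ℝ,
        (T v) i * korkInd (∑ k, (T v) k) = v n * korkInd (∑ k, v k) := by
      intro v
      have h1 : T v i = v n := by
        have := hTapp v n
        rwa [hedef, Equiv.swap_apply_left] at this
      have h2 : ∑ k, T v k = ∑ k, v k := by
        calc ∑ k, T v k = ∑ j, T v (e j) := (Equiv.sum_comp e _).symm
          _ = ∑ j, v j := Finset.sum_congr rfl fun j _ => hTapp v j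
      rw [h1, h2]
    have mp := measurePreserving_piCongrLeft (fun _ : Fin N => μ) e
    calc ∫ ω, X n ω * korkInd (∑ k, X k ω) ∂ℙ
        = ∫ v, v n * korkInd (∑ k, v k) ∂(Measure.map (fun ω => (fun n => X n ω)) ℙ) :=
          (integral_map hmΦ.aemeasurable (hgm n).aestronglyMeasurable).symm
      _ = ∫ v, v n * korkInd (∑ k, v k) ∂(Measure.pi (fun _ : Fin N => μ)) := by rw [hπ]
      _ = ∫ v, (T v) i * korkInd (∑ k, (T v) k) ∂(Measure.pi (fun _ : Fin N => μ)) :=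
          (integral_congr_ae (Filter.Eventually.of_forall fun v => (key v))).symm
      _ = ∫ v, v i * korkInd (∑ k, v k) ∂(Measure.pi (fun _ : Fin N => μ)) :=
          by
            rw [hTdef]
            exact mp.integral_comp
              (MeasurableEquiv.piCongrLeft (fun _ : Fin N => ℝ) e).measurableEmbedding
              (fun v => v i * korkInd (∑ k, v k))
      _ = ∫ ω, X i ω * korkInd (∑ k, X k ω) ∂ℙ := by
          rw [← hπ]
          exact integral_map hmΦ.aemeasurable (hgm i).aestronglyMeasurable
  have hsum_exch : (N : ℝ) * ∫ ω, X i ω * korkInd (∑ n, X n ω) ∂ℙ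
      = ∫ ω, (∑ n, X n ω) * korkInd (∑ n, X n ω) ∂ℙ := by
    have h1 : ∫ ω, (∑ n, X n ω) * korkInd (∑ n, X n ω) ∂ℙ
        = ∑ n, ∫ ω, X n ω * korkInd (∑ k, X k ω) ∂ℙ := by
      rw [← integral_finset_sum Finset.univ (fun n _ => I7 n)]
      refine integral_congr_ae (Filter.Eventually.of_forall fun ω => ?_)
      dsimp only
      rw [Finset.sum_mul]
    rw [h1, Finset.sum_congr rfl fun n _ => hexch n]
    simp [Finset.sum_const, Finset.card_univ, nsmul_eq_mul]
  -- expectations of single variables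
  have hEX' : ∫ ω, X' ω ∂ℙ = ∫ ω, X i ω ∂ℙ := hident'.integral_eq
  have hEξ : ∫ ω, (∑ n, X n ω) ∂ℙ = (N : ℝ) * ∫ ω, X i ω ∂ℙ := by
    rw [integral_finset_sum Finset.univ (fun n _ => hint n),
      Finset.sum_congr rfl fun n _ => (hident n).integral_eq]
    simp [Finset.sum_const, Finset.card_univ, nsmul_eq_mul]
  -- law of the triple (X i, X', S) equals law of (X', X i, S)
  set ν : Measure ℝ := Measure.map (fun ω => (∑ n, X n ω) - X i ω) ℙ with hνdef
  have hSsum : (fun ω => (∑ n, X n ω) - X i ω) = ∑ j ∈ Finset.univ.erase i, X j := by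
    funext ω
    rw [Finset.sum_apply]
    exact (Finset.sum_erase_eq_sub (Finset.mem_univ i)).symm
  have hindep_iS : IndepFun (X i) (fun ω => (∑ n, X n ω) - X i ω) ℙ := by
    rw [hSsum]
    exact (hindep.indepFun_finsetSum_of_notMem hmeas (Finset.notMem_erase i Finset.univ)).symm
  have hmpair : Measurable (fun ω => (X i ω, (∑ n, X n ω) - X i ω)) :=
    (hmeas i).prodMk hmS
  have hpair_map : Measure.map (fun ω => (X i ω, (∑ n, X n ω) - X i ω)) ℙ = μ.prod ν :=
    (indepFun_iff_map_prod_eq_prod_map_map (hmeas i).aemeasurable hmS.aemeasurable).mp hindep_iS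
  have hψm : Measurable (fun v : Fin N → ℝ => (v i, (∑ n, v n) - v i)) :=
    (measurable_pi_apply i).prodMk
      ((Finset.measurable_sum Finset.univ fun n _ => measurable_pi_apply n).sub
        (measurable_pi_apply i))
  have hindep'_pair : IndepFun X' (fun ω => (X i ω, (∑ n, X n ω) - X i ω)) ℙ :=
    hindep'.comp measurable_id hψm
  have hmT2 : Measurable (fun ω => (X' ω, X i ω, (∑ n, X n ω) - X i ω)) :=
    hmeas'.prodMk hmpair
  have hmT1 : Measurable (fun ω => (X i ω, X' ω, (∑ n, X n ω) - X i ω)) :=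
    (hmeas i).prodMk (hmeas'.prodMk hmS)
  have hT2 : Measure.map (fun ω => (X' ω, X i ω, (∑ n, X n ω) - X i ω)) ℙ = μ.prod (μ.prod ν) := by
    have h := (indepFun_iff_map_prod_eq_prod_map_map hmeas'.aemeasurable
      hmpair.aemeasurable).mp hindep'_pair
    rw [hident'.map_eq, hpair_map] at h
    exact h
  have hr : MeasurePreserving (fun p : ℝ × ℝ × ℝ => (p.2.1, p.1, p.2.2))
      (μ.prod (μ.prod ν)) (μ.prod (μ.prod ν)) := by
    have h1 := measurePreserving_prodAssoc μ μ ν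
    have h2 := (Measure.measurePreserving_swap (μ := μ) (ν := μ)).prod (MeasurePreserving.id ν)
    have h3 := h1.symm
    have h4 := (h1.comp h2).comp h3
    have hc : (fun p : ℝ × ℝ × ℝ => (p.2.1, p.1, p.2.2))
        = (MeasurableEquiv.prodAssoc ∘ Prod.map Prod.swap id) ∘
          (MeasurableEquiv.prodAssoc.symm : ℝ × ℝ × ℝ ≃ᵐ (ℝ × ℝ) × ℝ) := rfl
    rw [hc]
    exact h4
  have hT : Measure.map (fun ω => (X i ω, X' ω, (∑ n, X n ω) - X i ω)) ℙ
      = Measure.map (fun ω => (X' ω, X i ω, (∑ n, X n ω) - X i ω)) ℙ := by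
    have hc : (fun ω => (X i ω, X' ω, (∑ n, X n ω) - X i ω))
        = (fun p : ℝ × ℝ × ℝ => (p.2.1, p.1, p.2.2)) ∘
          (fun ω => (X' ω, X i ω, (∑ n, X n ω) - X i ω)) := rfl
    rw [hc, ← Measure.map_map hr.measurable hmT2, hT2, hr.map_eq, ← hT2]
  have hswap : ∀ F : ℝ × ℝ × ℝ → ℝ, Measurable F →
      ∫ ω, F (X i ω, X' ω, (∑ n, X n ω) - X i ω) ∂ℙ
        = ∫ ω, F (X' ω, X i ω, (∑ n, X n ω) - X i ω) ∂ℙ := by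
    intro F hF
    rw [← integral_map hmT1.aemeasurable hF.aestronglyMeasurable, hT,
      integral_map hmT2.aemeasurable hF.aestronglyMeasurable]
  have hmF : Measurable (fun t : ℝ => t * korkInd t) := measurable_id.mul korkInd_measurable
  -- D = A
  have hDA : ∫ ω, (X' ω + ((∑ n, X n ω) - X i ω)) * korkInd (X' ω + ((∑ n, X n ω) - X i ω)) ∂ℙ
      = ∫ ω, (∑ n, X n ω) * korkInd (∑ n, X n ω) ∂ℙ := by
    have h := hswap (fun p => (p.2.1 + p.2.2) * korkInd (p.2.1 + p.2.2))
      ((measurable_snd.fst.add measurable_snd.snd).mul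
        (korkInd_measurable.comp (measurable_snd.fst.add measurable_snd.snd)))
    dsimp only at h
    rw [h]
    refine integral_congr_ae (Filter.Eventually.of_forall fun ω => ?_)
    dsimp only
    have e : X i ω + ((∑ n, X n ω) - X i ω) = ∑ n, X n ω := by ring
    rw [e]
  -- B = C
  have hBC : ∫ ω, (∑ n, X n ω) * korkInd (X' ω + ((∑ n, X n ω) - X i ω)) ∂ℙ
      = ∫ ω, (X' ω + ((∑ n, X n ω) - X i ω)) * korkInd (∑ n, X n ω) ∂ℙ := by
    have h := hswap (fun p => (p.1 + p.2.2) * korkInd (p.2.1 + p.2.2))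
      ((measurable_fst.add measurable_snd.snd).mul
        (korkInd_measurable.comp (measurable_snd.fst.add measurable_snd.snd)))
    dsimp only at h
    have e : ∀ ω : Ω, X i ω + ((∑ n, X n ω) - X i ω) = ∑ n, X n ω := fun ω => by ring
    calc ∫ ω, (∑ n, X n ω) * korkInd (X' ω + ((∑ n, X n ω) - X i ω)) ∂ℙ
        = ∫ ω, (X i ω + ((∑ n, X n ω) - X i ω)) *
            korkInd (X' ω + ((∑ n, X n ω) - X i ω)) ∂ℙ := by
          refine integral_congr_ae (Filter.Eventually.of_forall fun ω => ?_)
          dsimp only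
          rw [e ω]
      _ = ∫ ω, (X' ω + ((∑ n, X n ω) - X i ω)) *
            korkInd (X i ω + ((∑ n, X n ω) - X i ω)) ∂ℙ := h
      _ = ∫ ω, (X' ω + ((∑ n, X n ω) - X i ω)) * korkInd (∑ n, X n ω) ∂ℙ := by
          refine integral_congr_ae (Filter.Eventually.of_forall fun ω => ?_)
          dsimp only
          rw [e ω]
  -- C split
  have hCsplit : ∫ ω, (X' ω + ((∑ n, X n ω) - X i ω)) * korkInd (∑ n, X n ω) ∂ℙ
      = ∫ ω, X' ω * korkInd (∑ n, X n ω) ∂ℙ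
        + (∫ ω, (∑ n, X n ω) * korkInd (∑ n, X n ω) ∂ℙ
          - ∫ ω, X i ω * korkInd (∑ n, X n ω) ∂ℙ) := by
    have Isub1 : Integrable (fun ω => (∑ n, X n ω) * korkInd (∑ n, X n ω)
        - X i ω * korkInd (∑ n, X n ω)) ℙ := I1.sub (I7 i)
    rw [← integral_sub I1 (I7 i), ← integral_add I5 Isub1]
    refine integral_congr_ae (Filter.Eventually.of_forall fun ω => ?_)
    dsimp only
    ring
  -- expanding the product integrand
  have hexpand : ∫ ω, (X i ω - X' ω) *
      (korkInd (X i ω + ((∑ n, X n ω) - X i ω))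
        - korkInd (X' ω + ((∑ n, X n ω) - X i ω))) ∂ℙ
      = (∫ ω, (∑ n, X n ω) * korkInd (∑ n, X n ω) ∂ℙ
          - ∫ ω, (∑ n, X n ω) * korkInd (X' ω + ((∑ n, X n ω) - X i ω)) ∂ℙ)
        - (∫ ω, (X' ω + ((∑ n, X n ω) - X i ω)) * korkInd (∑ n, X n ω) ∂ℙ
          - ∫ ω, (X' ω + ((∑ n, X n ω) - X i ω)) *
              korkInd (X' ω + ((∑ n, X n ω) - X i ω)) ∂ℙ) := by
    have J1 : Integrable (fun ω => (∑ n, X n ω) * korkInd (∑ n, X n ω)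
        - (∑ n, X n ω) * korkInd (X' ω + ((∑ n, X n ω) - X i ω))) ℙ := I1.sub I2
    have J2 : Integrable (fun ω => (X' ω + ((∑ n, X n ω) - X i ω)) * korkInd (∑ n, X n ω)
        - (X' ω + ((∑ n, X n ω) - X i ω)) *
          korkInd (X' ω + ((∑ n, X n ω) - X i ω))) ℙ := I3.sub I4
    rw [← integral_sub I1 I2, ← integral_sub I3 I4, ← integral_sub J1 J2]
    refine integral_congr_ae (Filter.Eventually.of_forall fun ω => ?_)
    dsimp only
    have e : X i ω + ((∑ n, X n ω) - X i ω) = ∑ n, X n ω := by ring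
    rw [e]
    ring
  -- final arithmetic
  rw [h_max, hexpand, hBC, hDA]
  set EA := ∫ ω, (∑ n, X n ω) * korkInd (∑ n, X n ω) ∂ℙ
  set EC := ∫ ω, (X' ω + ((∑ n, X n ω) - X i ω)) * korkInd (∑ n, X n ω) ∂ℙ
  set EI := ∫ ω, X i ω * korkInd (∑ n, X n ω) ∂ℙ
  set P := (ℙ {ω | 0 < ∑ n, X n ω}).toReal
  have hNC : (N : ℝ) * EC = (∫ ω, (∑ n, X n ω) ∂ℙ) * P + (N : ℝ) * EA - EA := by
    calc (N : ℝ) * EC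
        = (N : ℝ) * ((∫ ω, X' ω ∂ℙ) * P + (EA - EI)) := by rw [hCsplit, h_mulX']
      _ = ((N : ℝ) * (∫ ω, X' ω ∂ℙ)) * P + (N : ℝ) * EA - (N : ℝ) * EI := by ring
      _ = (∫ ω, (∑ n, X n ω) ∂ℙ) * P + (N : ℝ) * EA - EA := by
          rw [hsum_exch, hEX', ← hEξ]
  have hhalf : (N / 2 : ℝ) * ((EA - EC) - (EC - EA)) = (N : ℝ) * EA - (N : ℝ) * EC := by
    ring
  rw [hhalf]
  linarith
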